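/- arXiv:1502.01003 — 3 statements merged into one kernel-verified Lean document; each statement's English description precedes it below -/
import Mathlib

section
/- Consider the quartic equation R⁴ − R² = −2m[(H − M)R + M] in the variable R, where m > 0, H > M > 0 are real constants. Then this equation has at most two real solutions in the open interval (0, 1). -/
open Set

/-- A strictly convex function has no zero strictly between two zeros. -/
lemma no_middle_zero {D : Set ℝ} {F : ℝ → ℝ} (hF : StrictConvexOn ℝ D F)
    {x y z : ℝ} (hx : x ∈ D) (hz : z ∈ D) (hxy : x < y) (hyz : y < z)
    (hFx : F x = 0) (hFz : F z = 0) : F y < 0 := by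
  have hxz : x ≠ z := ne_of_lt (hxy.trans hyz)
  set t : ℝ := (z - y) / (z - x) with ht
  have hzx : 0 < z - x := by linarith
  have ht0 : 0 < t := div_pos (by linarith) hzx
  have ht1 : t < 1 := (div_lt_one hzx).2 (by linarith)
  have hsum : t + (1 - t) = 1 := by ring
  have hy : t • x + (1 - t) • z = y := by
    field_simp [ht, smul_eq_mul]
    have h : t * (z - x) = z - y := by rw [ht]; exact div_mul_cancel₀ _ hzx.ne'
    linear_combination -h
  have := hF.2 hx hz hxz ht0 (by linarith) hsum
  rw [hy, hFx, hFz] at this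
  simpa using this

/-- The apparent-horizon equation R⁴ − R² = −2m[(H − M)R + M] of generalized McVittie
(with m > 0, H > M > 0) has at most two real solutions in the open interval (0,1). -/
theorem stmt3 (m H M : ℝ) (hm : 0 < m) (hMpos : 0 < M) (hHM : M < H) :
    Set.encard {R : ℝ | R ∈ Set.Ioo (0:ℝ) 1 ∧
      R^4 - R^2 = -(2*m) * ((H - M)*R + M)} ≤ 2 := by
  set b : ℝ := 2 * m * M with hb
  set a : ℝ := 2 * m * (H - M) with ha
  have hbpos : 0 < b := by positivity
  set F : ℝ → ℝ := fun x => x ^ 3 - x + a + b * x⁻¹ with hFdef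
  set s : Set ℝ := {R : ℝ | R ∈ Set.Ioo (0:ℝ) 1 ∧
      R^4 - R^2 = -(2*m) * ((H - M)*R + M)} with hs
  -- membership in s gives F R = 0
  have hmem : ∀ R ∈ s, R ∈ Set.Ioo (0:ℝ) 1 ∧ F R = 0 := by
    rintro R ⟨hR, heq⟩
    refine ⟨hR, ?_⟩
    have hR0 : R ≠ 0 := ne_of_gt hR.1
    have : R * F R = 0 := by
      simp only [hFdef]
      field_simp
      simp only [ha, hb]
      linear_combination heq
    rcases mul_eq_zero.1 this with h | h
    · exact absurd h hR0
    · exact h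
  -- first derivative
  have hderiv1 : ∀ x : ℝ, x ≠ 0 →
      HasDerivAt F (3 * x ^ 2 - 1 - b * (x ^ 2)⁻¹) x := by
    intro x hx
    have h1 : HasDerivAt (fun x : ℝ => x ^ 3) (3 * x ^ 2) x := by
      simpa using hasDerivAt_pow 3 x
    have h2 : HasDerivAt (fun x : ℝ => x⁻¹) (-(x ^ 2)⁻¹) x := hasDerivAt_inv hx
    have h3 : HasDerivAt (fun x : ℝ => b * x⁻¹) (b * -(x ^ 2)⁻¹) x := h2.const_mul b
    have := ((h1.sub (hasDerivAt_id x)).add_const a).add h3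
    exact this.congr_deriv (by ring)
  -- deriv F equals the formula on x ≠ 0
  have hderivF : ∀ x : ℝ, x ≠ 0 → deriv F x = 3 * x ^ 2 - 1 - b * (x ^ 2)⁻¹ :=
    fun x hx => (hderiv1 x hx).deriv
  -- second derivative
  have hG : ∀ x : ℝ, x ≠ 0 →
      HasDerivAt (fun x : ℝ => 3 * x ^ 2 - 1 - b * (x ^ 2)⁻¹)
        (6 * x + 2 * b * (x ^ 3)⁻¹) x := by
    intro x hx
    have h1 : HasDerivAt (fun x : ℝ => 3 * x ^ 2) (3 * (2 * x)) x := by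
      simpa using (hasDerivAt_pow 2 x).const_mul 3
    have hx2 : (x : ℝ) ^ 2 ≠ 0 := pow_ne_zero 2 hx
    have h2 : HasDerivAt (fun x : ℝ => ((x : ℝ) ^ 2)⁻¹)
        (-(2 * x ^ (2 - 1)) / (x ^ 2) ^ 2) x := (hasDerivAt_pow 2 x).inv hx2
    have h3 := (h1.sub_const 1).sub (h2.const_mul b)
    exact h3.congr_deriv (by field_simp; ring)
  have hderiv2 : ∀ x ∈ Set.Ioo (0:ℝ) 1, 0 < deriv^[2] F x := by
    intro x hx
    have hx0 : x ≠ 0 := ne_of_gt hx.1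
    have hopen : {y : ℝ | y ≠ 0} ∈ nhds x := by
      exact IsOpen.mem_nhds (isOpen_compl_singleton) hx0
    have heq : deriv F =ᶠ[nhds x] fun y => 3 * y ^ 2 - 1 - b * (y ^ 2)⁻¹ := by
      filter_upwards [hopen] with y hy
      exact hderivF y hy
    have : deriv (deriv F) x = 6 * x + 2 * b * (x ^ 3)⁻¹ := by
      rw [heq.deriv_eq]
      exact (hG x hx0).deriv
    simp only [Function.iterate_succ, Function.iterate_zero, Function.comp_apply, id_eq]
    rw [this]
    have : 0 < (x ^ 3)⁻¹ := inv_pos.2 (pow_pos hx.1 3)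
    nlinarith [hx.1]
  -- strict convexity on Ioo 0 1
  have hconv : StrictConvexOn ℝ (Set.Ioo (0:ℝ) 1) F := by
    apply strictConvexOn_of_deriv2_pos (convex_Ioo 0 1)
    · intro x hx
      exact ((hderiv1 x (ne_of_gt hx.1)).continuousAt).continuousWithinAt
    · intro x hx
      rw [interior_Ioo] at hx
      exact hderiv2 x hx
  -- conclude: at most two zeros
  by_contra hcon
  push_neg at hcon
  obtain ⟨x, z, hxs, hzs, hxz⟩ := Set.one_lt_encard_iff.1 ((by norm_num : (1:ℕ∞) < 2).trans hcon)
  have hnsub : ¬ s ⊆ {x, z} := by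
    intro hsub
    have := Set.encard_le_encard hsub
    have h2 : ({x, z} : Set ℝ).encard = 2 := Set.encard_pair hxz
    rw [h2] at this
    exact absurd (lt_of_lt_of_le hcon this) (lt_irrefl _)
  obtain ⟨y, hys, hy⟩ := Set.not_subset.1 hnsub
  simp only [Set.mem_insert_iff, Set.mem_singleton_iff, not_or] at hy
  obtain ⟨hyx, hyz⟩ := hy
  obtain ⟨hxI, hFx⟩ := hmem x hxs
  obtain ⟨hyI, hFy⟩ := hmem y hys
  obtain ⟨hzI, hFz⟩ := hmem z hzs
  -- order the three distinct points and derive contradiction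
  have key : ∀ p q r : ℝ, p ∈ Set.Ioo (0:ℝ) 1 → q ∈ Set.Ioo (0:ℝ) 1 →
      r ∈ Set.Ioo (0:ℝ) 1 → p < q → q < r → F p = 0 → F q = 0 → F r = 0 → False := by
    intro p q r hp hq hr hpq hqr hFp hFq hFr
    have := no_middle_zero hconv hp hr hpq hqr hFp hFr
    rw [hFq] at this
    exact lt_irrefl 0 this
  rcases lt_trichotomy x y with h1 | h1 | h1
  · rcases lt_trichotomy y z with h2 | h2 | h2
    · exact key x y z hxI hyI hzI h1 h2 hFx hFy hFz
    · exact hyz h2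
    · rcases lt_trichotomy x z with h3 | h3 | h3
      · exact key x z y hxI hzI hyI h3 h2 hFx hFz hFy
      · exact hxz h3
      · exact key z x y hzI hxI hyI h3 h1 hFz hFx hFy
  · exact hyx h1.symm
  · rcases lt_trichotomy x z with h2 | h2 | h2
    · exact key y x z hyI hxI hzI h1 h2 hFy hFx hFz
    · exact hxz h2
    · rcases lt_trichotomy y z with h3 | h3 | h3
      · exact key y z x hyI hzI hxI h3 h2 hFy hFz hFx
      · exact hyz h3
      · exact key z y x hzI hyI hxI h3 h1 hFz hFy hFx
end

section
/- Let a > 0 and let ξ : [t₀,∞) → ℝ be twice continuously differentiable with ξ(t) → 0, ξ'(t) → 0, and ξ''(t) = o(ξ'(t)) as t → ∞, and suppose e^{at}ξ(t) → ∞. Then e^{−at}∫_{t₀}^t e^{au} ξ(u) du = ξ(t)/a − ξ'(t)/a² + o(ξ'(t)) as t → ∞. -/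
open Filter Real Set Asymptotics intervalIntegral

lemma hasDerivAt_exp_mul (k t : ℝ) :
    HasDerivAt (fun u => Real.exp (k*u)) (k * Real.exp (k*t)) t := by
  have h := (Real.hasDerivAt_exp (k*t)).comp t ((hasDerivAt_id t).const_mul k)
  exact h.congr_deriv (by ring)

lemma integral_exp_mul (k s t : ℝ) (hk : k ≠ 0) :
    ∫ u in s..t, Real.exp (k*u) = (Real.exp (k*t) - Real.exp (k*s))/k := by
  have h : ∀ x, HasDerivAt (fun u => Real.exp (k*u)/k) (Real.exp (k*x)) x := fun x => by
    have := (hasDerivAt_exp_mul k x).div_const k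
    rwa [mul_div_cancel_left₀ _ hk] at this
  rw [intervalIntegral.integral_eq_sub_of_hasDerivAt (fun x _ => h x)
    ((Real.continuous_exp.comp (continuous_const.mul continuous_id)).intervalIntegrable s t)]
  ring

lemma le_abs_of_sq_le_sq (A B : ℝ) (h : A^2 ≤ B^2) : A ≤ |B| := by
  nlinarith [abs_nonneg B, sq_abs B]

lemma myAbs_le (A B : ℝ) (hB : 0 ≤ B) (h : A^2 ≤ B^2) : |A| ≤ B := by
  nlinarith [abs_nonneg A, sq_abs A]

lemma mono_aux (f f' : ℝ → ℝ) (hd : ∀ t, HasDerivAt f (f' t) t)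
    (ε T : ℝ) (hb : ∀ s, T ≤ s → |f' s| ≤ (ε/2) * |f s|) :
    MonotoneOn (fun t => Real.exp (ε*t) * (f t)^2) (Set.Ici T) := by
  have hg : ∀ t, HasDerivAt (fun u => Real.exp (ε*u) * (f u)^2)
      (ε * Real.exp (ε*t) * (f t)^2 + Real.exp (ε*t) * (2 * f t ^ 1 * f' t)) t := by
    intro t
    have h1 := (hasDerivAt_exp_mul ε t).mul ((hd t).pow 2)
    exact h1.congr_deriv (by simp)
  apply monotoneOn_of_deriv_nonneg (convex_Ici T)
  · exact (Continuous.continuousOn (by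
      exact continuous_iff_continuousAt.2 fun t => (hg t).continuousAt))
  · exact fun t _ => (hg t).differentiableAt.differentiableWithinAt
  · intro t ht
    rw [interior_Ici] at ht
    rw [(hg t).deriv]
    have hbt := hb t ht.le
    have hp := mul_le_mul_of_nonneg_left hbt (abs_nonneg (f t))
    have inner : 0 ≤ ε * (f t)^2 + 2 * f t * f' t := by
      have h1 : -(f t * f' t) ≤ |f t| * |f' t| := by
        rw [← abs_mul]; exact neg_le_abs _
      have h3 : |f t| * |f t| = (f t)^2 := by
        rw [abs_mul_abs_self, sq]
      rw [← h3]
      linarith [hp, h1]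
    have heq : ε * Real.exp (ε*t) * (f t)^2 + Real.exp (ε*t) * (2 * f t ^ 1 * f' t)
        = Real.exp (ε*t) * (ε * (f t)^2 + 2 * f t * f' t) := by ring
    rw [heq]
    exact mul_nonneg (Real.exp_pos _).le inner

lemma decay_bound (f f' : ℝ → ℝ) (hd : ∀ t, HasDerivAt f (f' t) t)
    (δ T : ℝ) (hb : ∀ s, T ≤ s → |f' s| ≤ δ * |f s|)
    {u t : ℝ} (hu : T ≤ u) (ht : u ≤ t) :
    |f u| ≤ |f t| * Real.exp (δ*(t-u)) := by
  have key := mono_aux f f' hd (2*δ) T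
      (fun s hs => by have := hb s hs; calc |f' s| ≤ δ * |f s| := this
                      _ = (2*δ/2) * |f s| := by ring)
      (Set.mem_Ici.2 hu) (Set.mem_Ici.2 (hu.trans ht)) ht
  simp only at key
  have hinv : Real.exp (2*δ*u) * Real.exp (-(2*δ*u)) = 1 := by
    rw [← Real.exp_add]; simp
  have hcomb : Real.exp (2*δ*t) * Real.exp (-(2*δ*u)) = Real.exp (2*δ*(t-u)) := by
    rw [← Real.exp_add]; congr 1; ring
  have h3 := mul_le_mul_of_nonneg_right key (Real.exp_pos (-(2*δ*u))).le
  apply myAbs_le _ _ (by positivity)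
  have e1 : (|f t| * Real.exp (δ*(t-u)))^2 = (f t)^2 * Real.exp (2*δ*(t-u)) := by
    rw [mul_pow, sq_abs, sq (Real.exp (δ*(t-u))), ← Real.exp_add]
    congr 2; ring
  rw [e1]
  calc (f u)^2 = (Real.exp (2*δ*u) * (f u)^2) * Real.exp (-(2*δ*u)) := by
        rw [mul_comm (Real.exp (2*δ*u)) ((f u)^2), mul_assoc, hinv, mul_one]
    _ ≤ (Real.exp (2*δ*t) * (f t)^2) * Real.exp (-(2*δ*u)) := h3
    _ = (f t)^2 * Real.exp (2*δ*(t-u)) := by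
        rw [mul_comm (Real.exp (2*δ*t)) ((f t)^2), mul_assoc, hcomb]

lemma ibp (a : ℝ) (ha : a ≠ 0) (f f' : ℝ → ℝ) (hd : ∀ t, HasDerivAt f (f' t) t)
    (hcf' : Continuous f') (s t : ℝ) :
    ∫ u in s..t, Real.exp (a*u) * f u
      = Real.exp (a*t) * f t / a - Real.exp (a*s) * f s / a
        - (∫ u in s..t, Real.exp (a*u) * f' u) / a := by
  have hv : ∀ x, HasDerivAt (fun u => Real.exp (a*u)/a) (Real.exp (a*x)) x := fun x => by
    have := (hasDerivAt_exp_mul a x).div_const a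
    rwa [mul_div_cancel_left₀ _ ha] at this
  have h := intervalIntegral.integral_mul_deriv_eq_deriv_mul
    (u := f) (u' := f') (v := fun u => Real.exp (a*u)/a) (v' := fun u => Real.exp (a*u))
    (fun x _ => hd x) (fun x _ => hv x)
    (hcf'.intervalIntegrable s t)
    ((Real.continuous_exp.comp (continuous_const.mul continuous_id)).intervalIntegrable s t)
  have e1 : ∫ u in s..t, Real.exp (a*u) * f u = ∫ u in s..t, f u * Real.exp (a*u) :=
    intervalIntegral.integral_congr (fun x _ => mul_comm _ _)
  have e2 : ∫ u in s..t, f' u * (Real.exp (a*u)/a) = (∫ u in s..t, Real.exp (a*u) * f' u) / a := by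
    rw [← intervalIntegral.integral_div]
    exact intervalIntegral.integral_congr (fun x _ => by ring)
  rw [e1, h, e2]
  ring

set_option maxHeartbeats 2000000 in
/-- Two-term asymptotic expansion (Eq. A2 / Eq. 27): when ξ decays slower than e^{−at}
and ξ'' = o(ξ'), we have e^{−at}∫_{t₀}^t e^{au}ξ(u)du = ξ(t)/a − ξ'(t)/a² + o(ξ'(t)). -/
theorem stmt12 (a t₀ : ℝ) (ha : 0 < a)
    (ξ ξ' ξ'' : ℝ → ℝ)
    (hd1 : ∀ t, HasDerivAt ξ (ξ' t) t)
    (hd2 : ∀ t, HasDerivAt ξ' (ξ'' t) t)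
    (hc2 : Continuous ξ'')
    (hlim0 : Tendsto ξ atTop (nhds 0))
    (hlim1 : Tendsto ξ' atTop (nhds 0))
    (hsmall : ξ'' =o[atTop] ξ')
    (hslow : Tendsto (fun t => Real.exp (a*t) * ξ t) atTop atTop) :
    (fun t => Real.exp (-a*t) * (∫ u in t₀..t, Real.exp (a*u) * ξ u)
      - (ξ t / a - ξ' t / a^2)) =o[atTop] ξ' := by
  have hcξ : Continuous ξ := continuous_iff_continuousAt.2 fun x => (hd1 x).continuousAt
  have hcξ' : Continuous ξ' := continuous_iff_continuousAt.2 fun x => (hd2 x).continuousAt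
  -- extraction of the smallness hypothesis
  have small : ∀ δ : ℝ, 0 < δ → ∃ T, ∀ t, T ≤ t → |ξ'' t| ≤ δ * |ξ' t| := by
    intro δ hδ
    have h := hsmall.def hδ
    rw [eventually_atTop] at h
    obtain ⟨T, hT⟩ := h
    exact ⟨T, fun t ht => by simpa [Real.norm_eq_abs] using hT t ht⟩
  -- ξ' is nonzero at arbitrarily large points
  have hne : ∀ S : ℝ, ∃ t, S ≤ t ∧ ξ' t ≠ 0 := by
    intro S
    by_contra h
    push_neg at h
    have hconst : ∀ t, S ≤ t → ξ t = ξ S := by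
      intro t ht
      have h1 : ∫ u in S..t, ξ' u = ξ t - ξ S :=
        intervalIntegral.integral_eq_sub_of_hasDerivAt (fun x _ => hd1 x)
          (hcξ'.intervalIntegrable S t)
      have h2 : ∫ u in S..t, ξ' u = 0 := by
        rw [intervalIntegral.integral_congr (g := fun _ => (0:ℝ)) ?_]
        · simp
        · intro x hx
          rw [Set.uIcc_of_le ht] at hx
          exact h x hx.1
      linarith [h1.symm.trans h2]
    have hlimS : Tendsto ξ atTop (nhds (ξ S)) := by
      apply Tendsto.congr' _ tendsto_const_nhds
      filter_upwards [eventually_ge_atTop S] with t ht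
      exact (hconst t ht).symm
    have hS0 : ξ S = 0 := tendsto_nhds_unique hlimS hlim0
    obtain ⟨t, ht1, ht2⟩ := ((hslow.eventually_ge_atTop 1).and (eventually_ge_atTop S)).exists
    rw [hconst t ht2, hS0, mul_zero] at ht1
    linarith
  -- the pure exponential is o(ξ')
  have hexp_o : (fun t => Real.exp (-a*t)) =o[atTop] ξ' := by
    obtain ⟨T₁, hT₁⟩ := small (a/4) (by positivity)
    obtain ⟨T, hTT₁, hTne⟩ := hne T₁
    have hdecay : ∀ t, T ≤ t → |ξ' T| ≤ |ξ' t| * Real.exp ((a/4)*(t-T)) := fun t ht =>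
      decay_bound ξ' ξ'' hd2 (a/4) T₁ hT₁ hTT₁ ht
    have htend : Tendsto (fun t => Real.exp (-(3*a/4)*t)) atTop (nhds 0) := by
      have h1 : Tendsto (fun t : ℝ => (3*a/4)*t) atTop atTop :=
        Tendsto.const_mul_atTop (by positivity) tendsto_id
      have h2 := (Real.tendsto_exp_atTop.comp h1).inv_tendsto_atTop
      refine h2.congr fun t => ?_
      show (Real.exp ((3*a/4)*t))⁻¹ = _
      rw [← Real.exp_neg]; congr 1; ring
    rw [Asymptotics.isLittleO_iff]
    intro c hc
    have hc₁ : 0 < c * (|ξ' T| * Real.exp ((a/4)*T)) :=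
      mul_pos hc (mul_pos (abs_pos.2 hTne) (Real.exp_pos _))
    filter_upwards [htend.eventually (gt_mem_nhds hc₁), eventually_ge_atTop T] with t h1 h2
    rw [Real.norm_eq_abs, Real.norm_eq_abs, abs_of_pos (Real.exp_pos _)]
    have hlb : |ξ' T| * Real.exp (-(a/4)*(t-T)) ≤ |ξ' t| := by
      calc |ξ' T| * Real.exp (-(a/4)*(t-T))
          ≤ (|ξ' t| * Real.exp ((a/4)*(t-T))) * Real.exp (-(a/4)*(t-T)) :=
            mul_le_mul_of_nonneg_right (hdecay t h2) (Real.exp_pos _).le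
        _ = |ξ' t| := by
            rw [mul_assoc, ← Real.exp_add, show (a/4)*(t-T) + -(a/4)*(t-T) = 0 by ring,
              Real.exp_zero, mul_one]
    have hq : Real.exp ((a/4)*T) * Real.exp (-(a/4)*T) = 1 := by
      rw [← Real.exp_add, show (a/4)*T + -(a/4)*T = 0 by ring, Real.exp_zero]
    calc Real.exp (-a*t)
        = Real.exp (-(3*a/4)*t) * Real.exp (-(a/4)*T) * Real.exp (-(a/4)*(t-T)) := by
          rw [← Real.exp_add, ← Real.exp_add]; congr 1; ring
      _ ≤ (c * (|ξ' T| * Real.exp ((a/4)*T))) * Real.exp (-(a/4)*T) * Real.exp (-(a/4)*(t-T)) :=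
          mul_le_mul_of_nonneg_right
            (mul_le_mul_of_nonneg_right h1.le (Real.exp_pos _).le) (Real.exp_pos _).le
      _ = c * (|ξ' T| * Real.exp (-(a/4)*(t-T))) := by
          linear_combination (c * (|ξ' T| * Real.exp (-(a/4)*(t-T)))) * hq
      _ ≤ c * |ξ' t| := mul_le_mul_of_nonneg_left hlb hc.le
  -- the remainder integral term is o(ξ')
  have hE2 : (fun t => Real.exp (-a*t) * ∫ u in t₀..t, Real.exp (a*u) * ξ'' u) =o[atTop] ξ' := by
    rw [Asymptotics.isLittleO_iff]
    intro c hc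
    set δ := min (a/2) (a*c/4) with hδdef
    have hδpos : 0 < δ := lt_min (by positivity) (by positivity)
    have hδa : δ ≤ a/2 := min_le_left _ _
    have hδc : 2*δ/a ≤ c/2 := by
      have h := min_le_right (a/2) (a*c/4)
      rw [div_le_iff₀ ha]
      nlinarith
    obtain ⟨T₁, hT₁⟩ := small δ hδpos
    have hbound : ∀ u t, T₁ ≤ u → u ≤ t → |ξ' u| ≤ |ξ' t| * Real.exp (δ*(t-u)) :=
      fun u t hu ht => decay_bound ξ' ξ'' hd2 δ T₁ hT₁ hu ht
    set K := ∫ u in t₀..T₁, Real.exp (a*u) * ξ'' u with hKdef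
    have hKev : ∀ᶠ t in atTop, |K| * Real.exp (-a*t) ≤ (c/2) * |ξ' t| := by
      have h := (hexp_o.const_mul_left |K|).def (half_pos hc)
      filter_upwards [h] with t ht
      simpa [Real.norm_eq_abs, abs_mul, abs_of_nonneg (Real.exp_pos (-a*t)).le,
        abs_abs] using ht
    filter_upwards [hKev, eventually_ge_atTop T₁] with t hKt hTt
    have hInt : ∀ (s₁ s₂ : ℝ), IntervalIntegrable (fun u => Real.exp (a*u) * ξ'' u)
        MeasureTheory.volume s₁ s₂ := fun s₁ s₂ =>
      ((Real.continuous_exp.comp (continuous_const.mul continuous_id)).mul hc2).intervalIntegrable s₁ s₂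
    have hsplit : ∫ u in t₀..t, Real.exp (a*u) * ξ'' u
        = K + ∫ u in T₁..t, Real.exp (a*u) * ξ'' u := by
      rw [hKdef, intervalIntegral.integral_add_adjacent_intervals (hInt t₀ T₁) (hInt T₁ t)]
    -- bound the tail integral
    have hgint : IntervalIntegrable
        (fun u => δ * |ξ' t| * (Real.exp (δ*t) * Real.exp ((a-δ)*u)))
        MeasureTheory.volume T₁ t := by
      apply Continuous.intervalIntegrable
      continuity
    have htail : |∫ u in T₁..t, Real.exp (a*u) * ξ'' u|
        ≤ (2*δ/a) * (Real.exp (a*t) * |ξ' t|) := by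
      have hb := intervalIntegral.norm_integral_le_abs_of_norm_le
        (f := fun u => Real.exp (a*u) * ξ'' u)
        (g := fun u => δ * |ξ' t| * (Real.exp (δ*t) * Real.exp ((a-δ)*u)))
        (a := T₁) (b := t) ?_ hgint
      · have hval : ∫ u in T₁..t, δ * |ξ' t| * (Real.exp (δ*t) * Real.exp ((a-δ)*u))
            = δ * |ξ' t| * Real.exp (δ*t) *
              ((Real.exp ((a-δ)*t) - Real.exp ((a-δ)*T₁))/(a-δ)) := by
          rw [show (fun u => δ * |ξ' t| * (Real.exp (δ*t) * Real.exp ((a-δ)*u)))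
              = fun u => (δ * |ξ' t| * Real.exp (δ*t)) * Real.exp ((a-δ)*u) by
            funext u; ring]
          rw [intervalIntegral.integral_const_mul, integral_exp_mul _ _ _ (by linarith : a - δ ≠ 0)]
        rw [Real.norm_eq_abs] at hb
        refine hb.trans ?_
        rw [hval]
        have haδ : (0:ℝ) < a - δ := by linarith
        have hmono : Real.exp ((a-δ)*T₁) ≤ Real.exp ((a-δ)*t) := by
          apply Real.exp_le_exp.2
          nlinarith
        have hnn : 0 ≤ δ * |ξ' t| * Real.exp (δ*t) *
            ((Real.exp ((a-δ)*t) - Real.exp ((a-δ)*T₁))/(a-δ)) := by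
          apply mul_nonneg
          · positivity
          · apply div_nonneg (by linarith) haδ.le
        rw [abs_of_nonneg hnn]
        have hee : Real.exp (δ*t) * Real.exp ((a-δ)*t) = Real.exp (a*t) := by
          rw [← Real.exp_add]; congr 1; ring
        have hfrac : δ/(a-δ) ≤ 2*δ/a := by
          rw [div_le_div_iff₀ haδ ha]
          nlinarith
        have hstep1 : δ * |ξ' t| * Real.exp (δ*t) *
            ((Real.exp ((a-δ)*t) - Real.exp ((a-δ)*T₁))/(a-δ))
            ≤ δ * |ξ' t| * Real.exp (δ*t) * (Real.exp ((a-δ)*t)/(a-δ)) := by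
          apply mul_le_mul_of_nonneg_left _ (by positivity)
          gcongr
          linarith [Real.exp_pos ((a-δ)*T₁)]
        have hstep2 : δ * |ξ' t| * Real.exp (δ*t) * (Real.exp ((a-δ)*t)/(a-δ))
            = (δ/(a-δ)) * (Real.exp (a*t) * |ξ' t|) := by
          rw [← hee]; field_simp
        have hstep3 : (δ/(a-δ)) * (Real.exp (a*t) * |ξ' t|)
            ≤ (2*δ/a) * (Real.exp (a*t) * |ξ' t|) :=
          mul_le_mul_of_nonneg_right hfrac (by positivity)
        linarith [hstep1, hstep2 ▸ hstep1, hstep3]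
      · apply MeasureTheory.ae_restrict_of_forall_mem measurableSet_uIoc
        intro u hu
        rw [Set.uIoc_of_le hTt] at hu
        have hu1 : T₁ ≤ u := hu.1.le
        rw [Real.norm_eq_abs, abs_mul, abs_of_pos (Real.exp_pos _)]
        calc Real.exp (a*u) * |ξ'' u|
            ≤ Real.exp (a*u) * (δ * |ξ' u|) :=
              mul_le_mul_of_nonneg_left (hT₁ u hu1) (Real.exp_pos _).le
          _ ≤ Real.exp (a*u) * (δ * (|ξ' t| * Real.exp (δ*(t-u)))) := by
              apply mul_le_mul_of_nonneg_left _ (Real.exp_pos _).le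
              exact mul_le_mul_of_nonneg_left (hbound u t hu1 hu.2) hδpos.le
          _ = δ * |ξ' t| * (Real.exp (δ*t) * Real.exp ((a-δ)*u)) := by
              have h5 : Real.exp (a*u) * Real.exp (δ*(t-u))
                  = Real.exp (δ*t) * Real.exp ((a-δ)*u) := by
                rw [← Real.exp_add, ← Real.exp_add]; congr 1; ring
              linear_combination (δ * |ξ' t|) * h5
    -- combine
    rw [Real.norm_eq_abs, Real.norm_eq_abs, abs_mul, abs_of_pos (Real.exp_pos _), hsplit]
    have hE1 : Real.exp (-a*t) * Real.exp (a*t) = 1 := by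
      rw [← Real.exp_add, show -a*t + a*t = 0 by ring, Real.exp_zero]
    have habs : |K + ∫ u in T₁..t, Real.exp (a*u) * ξ'' u|
        ≤ |K| + (2*δ/a) * (Real.exp (a*t) * |ξ' t|) :=
      (abs_add_le _ _).trans (by linarith [htail])
    have hmul := mul_le_mul_of_nonneg_left habs (Real.exp_pos (-a*t)).le
    have hrw : Real.exp (-a*t) * (|K| + (2*δ/a) * (Real.exp (a*t) * |ξ' t|))
        = |K| * Real.exp (-a*t) + (2*δ/a) * |ξ' t| := by
      linear_combination ((2*δ/a) * |ξ' t|) * hE1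
    have hfin := mul_le_mul_of_nonneg_right hδc (abs_nonneg (ξ' t))
    linarith [hmul, hrw ▸ hmul, hKt, hfin]
  -- assemble via integration by parts
  have ha' : a ≠ 0 := ha.ne'
  have hEq : (fun t => Real.exp (-a*t) * (∫ u in t₀..t, Real.exp (a*u) * ξ u)
      - (ξ t / a - ξ' t / a^2))
      = fun t => (Real.exp (a*t₀) * (ξ' t₀ / a^2 - ξ t₀ / a)) * Real.exp (-a*t)
          + (1/a^2) * (Real.exp (-a*t) * ∫ u in t₀..t, Real.exp (a*u) * ξ'' u) := by
    funext t
    rw [ibp a ha' ξ ξ' hd1 hcξ' t₀ t, ibp a ha' ξ' ξ'' hd2 hc2 t₀ t]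
    have hE1 : Real.exp (-a*t) * Real.exp (a*t) = 1 := by
      rw [← Real.exp_add, show -a*t + a*t = 0 by ring, Real.exp_zero]
    linear_combination (ξ t / a - ξ' t / a^2) * hE1
  rw [hEq]
  exact (hexp_o.const_mul_left _).add (hE2.const_mul_left _)
end

section
/- Also, monotone convergence of L(t₀): under the hypotheses of the previous statement, lim_{t₀→∞} ∫_{t₀}^∞ e^{(β+σ)u} ξ(u) du = 0; hence for every z₀ > 0 there exists T > 0 such that for all t₀ > T the function z₋ with initial condition z₋(t₀)=z₀ satisfies z₋(t) > 0 for all t ≥ t₀. -/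
open Filter Real Set intervalIntegral

/-- Tail of a convergent improper integral tends to zero: the tail
L − ∫_{T₀}^{t₀} e^{(β+σ)u}ξ(u)du → 0 as t₀ → ∞; hence for every z₀ > 0 all
sufficiently late lower approximants stay positive. -/
theorem stmt16 (β σ Rinf T₀ L : ℝ) (hβ : 0 < β) (hσ : 0 < σ) (hR : 0 < Rinf)
    (ξ : ℝ → ℝ) (hξc : ContinuousOn ξ (Set.Ici T₀)) (hξneg : ∀ t ≥ T₀, ξ t < 0)
    (hconv : Tendsto (fun t => ∫ u in T₀..t, Real.exp ((β + σ)*u) * ξ u) atTop (nhds L)) :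
    Tendsto (fun t₀ => L - ∫ u in T₀..t₀, Real.exp ((β + σ)*u) * ξ u) atTop (nhds 0) ∧
    ∀ z₀ > 0, ∃ T > (0:ℝ), ∀ t₀ > T, ∀ t ≥ t₀,
      0 < Real.exp (-(β + σ)*t) *
        (Rinf * (∫ u in t₀..t, Real.exp ((β + σ)*u) * ξ u) + z₀ * Real.exp ((β + σ)*t₀)) := by
  set f : ℝ → ℝ := fun u => Real.exp ((β + σ)*u) * ξ u with hf
  set F : ℝ → ℝ := fun t => ∫ u in T₀..t, f u with hF
  have hfc : ContinuousOn f (Set.Ici T₀) :=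
    ((Real.continuous_exp.comp (continuous_const.mul continuous_id)).continuousOn).mul hξc
  have hint : ∀ a b : ℝ, T₀ ≤ a → T₀ ≤ b →
      IntervalIntegrable f MeasureTheory.volume a b := by
    intro a b ha hb
    refine (hfc.mono ?_).intervalIntegrable
    intro x hx
    rw [Set.uIcc_eq_union] at hx
    rcases hx with hx | hx
    · exact le_trans ha hx.1
    · exact le_trans hb hx.1
  have hfneg : ∀ u ≥ T₀, f u ≤ 0 := by
    intro u hu
    exact mul_nonpos_of_nonneg_of_nonpos (Real.exp_pos _).le (hξneg u hu).le
  -- F is antitone on [T₀, ∞)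
  have hanti : ∀ a b : ℝ, T₀ ≤ a → a ≤ b → F b ≤ F a := by
    intro a b ha hab
    have hsplit : F a + ∫ u in a..b, f u = F b :=
      integral_add_adjacent_intervals (hint _ _ le_rfl ha)
        (hint _ _ ha (le_trans ha hab))
    have hnonpos : (∫ u in a..b, f u) ≤ 0 := by
      have h0 : (∫ u in a..b, (0:ℝ)) = 0 := by simp
      rw [← h0]
      apply integral_mono_on hab (hint _ _ ha (ha.trans hab)) intervalIntegrable_const
      intro u hu
      exact hfneg u (le_trans ha hu.1)
    linarith
  have hFgeL : ∀ a : ℝ, T₀ ≤ a → L ≤ F a := by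
    intro a ha
    refine le_of_tendsto hconv ?_
    filter_upwards [eventually_ge_atTop a] with s hs
    exact hanti a s ha hs
  have h1 : Tendsto (fun t₀ => L - F t₀) atTop (nhds 0) := by
    have := hconv.const_sub L
    simpa using this
  refine ⟨h1, ?_⟩
  intro z₀ hz₀
  have hε : 0 < z₀ / Rinf := div_pos hz₀ hR
  have h2 : ∀ᶠ t₀ in atTop, |L - F t₀| < z₀ / Rinf := by
    have := Metric.tendsto_nhds.mp h1 (z₀ / Rinf) hε
    filter_upwards [this] with t ht
    simpa [Real.dist_eq] using ht
  obtain ⟨T₁, hT₁⟩ := eventually_atTop.mp h2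
  refine ⟨max T₁ (max T₀ 0) + 1, by positivity, ?_⟩
  intro t₀ ht₀ t ht
  have hT₀t₀ : T₀ ≤ t₀ := by
    have : max T₀ 0 ≤ max T₁ (max T₀ 0) := le_max_right _ _
    have := le_max_left T₀ 0
    linarith [le_max_right T₁ (max T₀ 0), le_max_left T₀ (0:ℝ)]
  have ht₀pos : 0 < t₀ := by
    linarith [le_max_right T₁ (max T₀ 0), le_max_right T₀ (0:ℝ)]
  have hT₁t₀ : T₁ ≤ t₀ := by
    linarith [le_max_left T₁ (max T₀ 0)]
  have habs : |L - F t₀| < z₀ / Rinf := hT₁ t₀ hT₁t₀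
  have hsplit : F t₀ + ∫ u in t₀..t, f u = F t :=
    integral_add_adjacent_intervals (hint _ _ le_rfl hT₀t₀)
      (hint _ _ hT₀t₀ (le_trans hT₀t₀ ht))
  have hL : L ≤ F t := hFgeL t (le_trans hT₀t₀ ht)
  have hlb : L - F t₀ ≤ ∫ u in t₀..t, f u := by linarith
  have hlb2 : -(z₀ / Rinf) < ∫ u in t₀..t, f u := by
    have := abs_lt.mp habs
    linarith [this.1]
  have hmul : -z₀ < Rinf * ∫ u in t₀..t, f u := by
    have := (mul_lt_mul_iff_right₀ hR).mpr hlb2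
    rw [mul_neg, mul_div_cancel₀ _ (ne_of_gt hR)] at this
    linarith
  have hexp1 : (1:ℝ) ≤ Real.exp ((β + σ)*t₀) := by
    rw [← Real.exp_zero]
    apply Real.exp_le_exp.mpr
    nlinarith
  have hze : z₀ ≤ z₀ * Real.exp ((β + σ)*t₀) := by nlinarith
  have hpos : 0 < Rinf * (∫ u in t₀..t, f u) + z₀ * Real.exp ((β + σ)*t₀) := by
    linarith
  exact mul_pos (Real.exp_pos _) hpos
end
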